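/- Lower bound on the critical visibility in arbitrary dimension: for every n-outcome POVM M on ℂ^d, the depolarised POVM Φ_{1/d}(M) is a convex combination of projective measurements (possibly after embedding into more outcomes); hence t(d) ≥ 1/d. -/
import Mathlib

open scoped ComplexOrder

/-- An `n`-outcome POVM on `ℂ^d`. -/
def IsPOVM {d n : ℕ} (M : Fin n → Matrix (Fin d) (Fin d) ℂ) : Prop :=
  (∀ i, (M i).PosSemidef) ∧ ∑ i, M i = 1

/-- A projective measurement: a POVM whose effects are orthogonal projections. -/
def IsProjectivePOVM {d n : ℕ} (M : Fin n → Matrix (Fin d) (Fin d) ℂ) : Prop :=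
  IsPOVM M ∧ ∀ i, (M i).IsHermitian ∧ M i * M i = M i

/-- The depolarising map with visibility `t`, applied effect-wise to a POVM. -/
noncomputable def depolPOVM {d n : ℕ} (t : ℝ)
    (M : Fin n → Matrix (Fin d) (Fin d) ℂ) : Fin n → Matrix (Fin d) (Fin d) ℂ :=
  fun i => (t : ℂ) • M i + (((1 - t : ℝ) : ℂ) * ((M i).trace / (d : ℂ))) • 1

open Matrix

/-- A two-outcome-type projective measurement built from a projection `Q`:
outcome `i` gets `Q`, outcome `j0` gets `1 - Q` (they get added if `i = j0`). -/
lemma aux_isProjectivePOVM {d n : ℕ} (i j0 : Fin n)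
    (Q : Matrix (Fin d) (Fin d) ℂ) (hherm : Qᴴ = Q) (hidem : Q * Q = Q) :
    IsProjectivePOVM (fun j : Fin n =>
      (if j = i then Q else 0) + (if j = j0 then 1 - Q else 0)) := by
  have hQpsd : Q.PosSemidef := by
    have := Matrix.posSemidef_conjTranspose_mul_self Q
    rwa [hherm, hidem] at this
  have hR : (1 - Q) * (1 - Q) = 1 - Q := by
    rw [mul_sub, sub_mul, sub_mul, hidem]; simp
  have hRherm : (1 - Q)ᴴ = 1 - Q := by
    rw [Matrix.conjTranspose_sub, Matrix.conjTranspose_one, hherm]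
  have hRpsd : (1 - Q).PosSemidef := by
    have := Matrix.posSemidef_conjTranspose_mul_self (1 - Q)
    rwa [hRherm, hR] at this
  have hQR : Q * (1 - Q) = 0 := by rw [mul_sub, mul_one, hidem, sub_self]
  have hRQ : (1 - Q) * Q = 0 := by rw [sub_mul, one_mul, hidem, sub_self]
  refine ⟨⟨fun j => ?_, ?_⟩, fun j => ?_⟩
  · apply Matrix.PosSemidef.add
    · split <;> simp [hQpsd, Matrix.PosSemidef.zero]
    · split <;> simp [hRpsd, Matrix.PosSemidef.zero]
  · rw [Finset.sum_add_distrib]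
    simp [Finset.sum_ite_eq']
  · dsimp only
    constructor
    · apply Matrix.IsHermitian.add
      · split
        · exact hherm
        · exact Matrix.isHermitian_zero
      · split
        · exact hRherm
        · exact Matrix.isHermitian_zero
    · split_ifs with h1 h2 h2 <;>
        simp [add_mul, mul_add, hidem, hR, hQR, hRQ]

theorem depol_inv_dim_simulable {d n : ℕ} (hd : 0 < d)
    (M : Fin n → Matrix (Fin d) (Fin d) ℂ) (hM : IsPOVM M) :
    depolPOVM ((d : ℝ)⁻¹) M ∈
      convexHull ℝ {P : Fin n → Matrix (Fin d) (Fin d) ℂ | IsProjectivePOVM P} := by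
  classical
  obtain ⟨hpsd, hsum⟩ := hM
  have hdR : (d : ℝ) ≠ 0 := Nat.cast_ne_zero.mpr hd.ne'
  have hdC : (d : ℂ) ≠ 0 := Nat.cast_ne_zero.mpr hd.ne'
  -- rule out `n = 0`
  rcases Nat.eq_zero_or_pos n with hn | hn
  · exfalso
    subst hn
    have h0 : (0 : Matrix (Fin d) (Fin d) ℂ) = 1 := by simpa using hsum
    have := congrFun (congrFun h0 ⟨0, hd⟩) ⟨0, hd⟩
    simp [Matrix.one_apply_eq] at this
  have hH : ∀ i, (M i).IsHermitian := fun i => (hpsd i).isHermitian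
  set U : Fin n → Matrix (Fin d) (Fin d) ℂ :=
    fun i => ((hH i).eigenvectorUnitary : Matrix (Fin d) (Fin d) ℂ) with hU
  set lam : Fin n → Fin d → ℝ := fun i => (hH i).eigenvalues with hlam
  have hlam0 : ∀ i k, 0 ≤ lam i k := fun i k => (hpsd i).eigenvalues_nonneg k
  set P : Fin n → Fin d → Matrix (Fin d) (Fin d) ℂ := fun i k =>
    U i * Matrix.diagonal (fun k' => if k' = k then 1 else 0) * (U i)ᴴ with hP
  have hUU : ∀ i, U i * (U i)ᴴ = 1 := by
    intro i
    have := ((hH i).eigenvectorUnitary).2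
    rw [Unitary.mem_iff] at this
    simpa [Matrix.star_eq_conjTranspose] using this.2
  have hUU' : ∀ i, (U i)ᴴ * U i = 1 := by
    intro i
    have := ((hH i).eigenvectorUnitary).2
    rw [Unitary.mem_iff] at this
    simpa [Matrix.star_eq_conjTranspose] using this.1
  -- the P i k are projections
  have hPherm : ∀ i k, (P i k)ᴴ = P i k := by
    intro i k
    simp only [hP, Matrix.conjTranspose_mul, Matrix.conjTranspose_conjTranspose,
      Matrix.diagonal_conjTranspose, mul_assoc]
    congr 2
    ext k' : 1
    simp [Pi.star_def, apply_ite]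
  have hPidem : ∀ i k, P i k * P i k = P i k := by
    intro i k
    simp only [hP]
    calc U i * Matrix.diagonal (fun k' => if k' = k then 1 else 0) * (U i)ᴴ *
          (U i * Matrix.diagonal (fun k' => if k' = k then 1 else 0) * (U i)ᴴ)
        = U i * (Matrix.diagonal (fun k' => if k' = k then 1 else 0) * ((U i)ᴴ * U i) *
            Matrix.diagonal (fun k' => if k' = k then 1 else 0)) * (U i)ᴴ := by
          simp only [mul_assoc]
      _ = U i * Matrix.diagonal (fun k' => if k' = k then 1 else 0) * (U i)ᴴ := by
          rw [hUU', mul_one, Matrix.diagonal_mul_diagonal]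
          have : (fun k' : Fin d => (if k' = k then (1:ℂ) else 0) * if k' = k then 1 else 0)
              = fun k' => if k' = k then (1:ℂ) else 0 := by
            funext k'
            split <;> simp
          rw [this]
  -- resolution of identity
  have hPsum : ∀ i, ∑ k, P i k = 1 := by
    intro i
    have : ∑ k, Matrix.diagonal (fun k' : Fin d => if k' = k then (1 : ℂ) else 0) = 1 := by
      ext a b
      by_cases hab : a = b
      · subst hab
        simp [Matrix.sum_apply, Matrix.diagonal_apply]
      · simp [Matrix.sum_apply, Matrix.diagonal_apply, hab, Matrix.one_apply_ne hab]
    calc ∑ k, P i k = U i * (∑ k, Matrix.diagonal (fun k' : Fin d => if k' = k then (1:ℂ) else 0)) * (U i)ᴴ := by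
          simp only [hP, Finset.mul_sum, Finset.sum_mul]
      _ = 1 := by rw [this, mul_one, hUU]
  -- spectral decomposition
  have hMeq : ∀ i, M i = ∑ k, ((lam i k : ℂ)) • P i k := by
    intro i
    have hspec := (hH i).spectral_theorem
    have hdiag : Matrix.diagonal (RCLike.ofReal ∘ (hH i).eigenvalues)
        = ∑ k, ((lam i k : ℂ)) • Matrix.diagonal (fun k' : Fin d => if k' = k then (1:ℂ) else 0) := by
      ext a b
      by_cases hab : a = b
      · subst hab
        simp [Matrix.diagonal_apply_eq, Matrix.sum_apply, Matrix.smul_apply,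
          Matrix.diagonal_apply, hlam]
      · simp [Matrix.diagonal_apply_ne _ hab, Matrix.sum_apply, Matrix.smul_apply,
          Matrix.diagonal_apply, hab]
    calc M i = U i * Matrix.diagonal (RCLike.ofReal ∘ (hH i).eigenvalues) * (U i)ᴴ := by
          simpa [Matrix.star_eq_conjTranspose] using hspec
      _ = ∑ k, ((lam i k : ℂ)) • P i k := by
          rw [hdiag, Finset.mul_sum, Finset.sum_mul]
          congr 1
          ext k
          simp [hP, Matrix.mul_smul, Matrix.smul_mul]
  -- traces
  have htrP : ∀ i k, (P i k).trace = 1 := by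
    intro i k
    have : (P i k).trace = (Matrix.diagonal (fun k' : Fin d => if k' = k then (1:ℂ) else 0)).trace := by
      rw [hP]
      rw [Matrix.trace_mul_cycle]
      rw [hUU', one_mul]
    rw [this, Matrix.trace_diagonal]
    simp
  set trR : Fin n → ℝ := fun i => ∑ k, lam i k with htrR
  have htrR0 : ∀ i, 0 ≤ trR i := fun i => Finset.sum_nonneg fun k _ => hlam0 i k
  have htrM : ∀ i, (M i).trace = ((trR i : ℝ) : ℂ) := by
    intro i
    rw [hMeq i, Matrix.trace_sum]
    simp only [Matrix.trace_smul, htrP, smul_eq_mul, mul_one]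
    push_cast [htrR]
    ring
  have hsumtr : ∑ i, trR i = (d : ℝ) := by
    have h1 : ∑ i, (M i).trace = (d : ℂ) := by
      rw [← Matrix.trace_sum, hsum, Matrix.trace_one]
      simp
    have h2 : ((∑ i, trR i : ℝ) : ℂ) = ((d : ℝ) : ℂ) := by
      push_cast
      rw [← h1]
      simp [htrM]
    exact_mod_cast h2
  -- weights and points
  set w : Fin n × Fin d × Fin n → ℝ :=
    fun x => (lam x.1 x.2.1 / d) * (trR x.2.2 / d) with hw
  set z : Fin n × Fin d × Fin n → (Fin n → Matrix (Fin d) (Fin d) ℂ) :=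
    fun x j => (if j = x.1 then P x.1 x.2.1 else 0) +
      (if j = x.2.2 then 1 - P x.1 x.2.1 else 0) with hz
  have hw0 : ∀ x, 0 ≤ w x := by
    intro x
    exact mul_nonneg (div_nonneg (hlam0 _ _) (Nat.cast_nonneg d))
      (div_nonneg (htrR0 _) (Nat.cast_nonneg d))
  have hwsum : ∑ x, w x = 1 := by
    rw [Fintype.sum_prod_type]
    simp only [hw, Fintype.sum_prod_type]
    calc ∑ i, ∑ k, ∑ j0, lam i k / d * (trR j0 / d)
        = (∑ i, ∑ k, lam i k / d) * (∑ j0, trR j0 / d) := by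
          rw [Finset.sum_mul]
          congr 1; ext i
          rw [Finset.sum_mul]
          congr 1; ext k
          rw [Finset.mul_sum]
      _ = 1 := by
          have hLL : ∑ i, ∑ k, lam i k = (d : ℝ) := hsumtr
          simp only [← Finset.sum_div]
          simp [hLL, hsumtr, div_self hdR]
  have hzmem : ∀ x, z x ∈ {P : Fin n → Matrix (Fin d) (Fin d) ℂ | IsProjectivePOVM P} := by
    intro x
    exact aux_isProjectivePOVM x.1 x.2.2 (P x.1 x.2.1) (hPherm _ _) (hPidem _ _)
  -- the convex combination equals the depolarised POVM
  have hkey : ∑ x, w x • z x = depolPOVM ((d : ℝ)⁻¹) M := by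
    funext j
    rw [Finset.sum_apply]
    have hsmul : ∀ (r : ℝ) (A : Matrix (Fin d) (Fin d) ℂ), r • A = ((r : ℂ)) • A :=
      fun r A => RCLike.real_smul_eq_coe_smul (K := ℂ) r A
    have hPM : ∀ i, ∑ k, ((lam i k / d : ℝ) : ℂ) • P i k = ((d : ℂ)⁻¹) • M i := by
      intro i
      rw [hMeq i, Finset.smul_sum]
      refine Finset.sum_congr rfl fun k _ => ?_
      rw [smul_smul]
      congr 1
      push_cast
      ring
    calc ∑ x, (w x • z x) j
        = ∑ i, ∑ k, ∑ j0, ((lam i k / d * (trR j0 / d) : ℝ) : ℂ) •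
            ((if j = i then P i k else 0) + (if j = j0 then 1 - P i k else 0)) := by
          rw [Fintype.sum_prod_type]
          refine Finset.sum_congr rfl fun i _ => ?_
          rw [Fintype.sum_prod_type]
          refine Finset.sum_congr rfl fun k _ => ?_
          refine Finset.sum_congr rfl fun j0 _ => ?_
          rw [Pi.smul_apply, hsmul]
      _ = (∑ k, ((lam j k / d : ℝ) : ℂ) • P j k)
            + ((((trR j / d : ℝ) : ℂ)) * (1 - (d : ℂ)⁻¹)) • 1 := by
          have hLL : ∑ i, ∑ k, lam i k = (d : ℝ) := hsumtr
          have hq1 : ∑ j0 : Fin n, ((trR j0 / d : ℝ) : ℂ) = 1 := by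
            rw [← Complex.ofReal_sum, ← Finset.sum_div, hsumtr, div_self hdR,
              Complex.ofReal_one]
          have hl1 : ∑ i, ∑ k, ((lam i k / d : ℝ) : ℂ) = 1 := by
            have h' : ∑ i, ∑ k, (lam i k / d : ℝ) = 1 := by
              simp only [← Finset.sum_div]
              simp [hLL, hsumtr, div_self hdR]
            calc ∑ i, ∑ k, ((lam i k / d : ℝ) : ℂ)
                = ((∑ i, ∑ k, (lam i k / d : ℝ) : ℝ) : ℂ) := by push_cast; rfl
              _ = 1 := by rw [h']; norm_num
          simp only [smul_add, Finset.sum_add_distrib]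
          congr 1
          · calc ∑ i, ∑ k, ∑ j0, ((lam i k / d * (trR j0 / d) : ℝ) : ℂ) •
                  (if j = i then P i k else 0)
                = ∑ i, ∑ k, ((lam i k / d : ℝ) : ℂ) • (if j = i then P i k else 0) := by
                  refine Finset.sum_congr rfl fun i _ => Finset.sum_congr rfl fun k _ => ?_
                  rw [← Finset.sum_smul]
                  congr 1
                  simp only [Complex.ofReal_mul]
                  rw [← Finset.mul_sum, hq1, mul_one]
              _ = ∑ i, (if j = i then ∑ k, ((lam i k / d : ℝ) : ℂ) • P i k else 0) := by
                  refine Finset.sum_congr rfl fun i _ => ?_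
                  split <;> simp
              _ = ∑ k, ((lam j k / d : ℝ) : ℂ) • P j k := by
                  rw [Finset.sum_ite_eq]
                  simp
          · calc ∑ i, ∑ k, ∑ j0, ((lam i k / d * (trR j0 / d) : ℝ) : ℂ) •
                  (if j = j0 then 1 - P i k else 0)
                = ∑ i, ∑ k, ((lam i k / d * (trR j / d) : ℝ) : ℂ) • (1 - P i k) := by
                  refine Finset.sum_congr rfl fun i _ => Finset.sum_congr rfl fun k _ => ?_
                  have hpush : ∀ j0 : Fin n, ((lam i k / d * (trR j0 / d) : ℝ) : ℂ) •
                      (if j = j0 then 1 - P i k else 0)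
                      = if j = j0 then ((lam i k / d * (trR j0 / d) : ℝ) : ℂ) • (1 - P i k)
                        else 0 := by
                    intro j0
                    split <;> simp
                  simp only [hpush]
                  rw [Finset.sum_ite_eq]
                  simp
              _ = (((trR j / d : ℝ) : ℂ)) • ((1 : Matrix (Fin d) (Fin d) ℂ) - (d : ℂ)⁻¹ • 1) := by
                  have hcomm : ∀ i k, ((lam i k / d * (trR j / d) : ℝ) : ℂ) • (1 - P i k)
                      = (((trR j / d : ℝ) : ℂ)) • (((lam i k / d : ℝ) : ℂ) • (1 - P i k)) := by
                    intro i k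
                    rw [smul_smul]
                    congr 1
                    push_cast
                    ring
                  simp only [hcomm, ← Finset.smul_sum]
                  congr 1
                  simp only [smul_sub, Finset.sum_sub_distrib]
                  congr 1
                  · simp only [← Finset.sum_smul]
                    rw [hl1, one_smul]
                  · calc ∑ i, ∑ k, ((lam i k / d : ℝ) : ℂ) • P i k
                        = ∑ i, ((d : ℂ)⁻¹) • M i :=
                          Finset.sum_congr rfl fun i _ => hPM i
                      _ = ((d : ℂ)⁻¹) • 1 := by rw [← Finset.smul_sum, hsum]
              _ = ((((trR j / d : ℝ) : ℂ)) * (1 - (d : ℂ)⁻¹)) • 1 := by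
                  rw [show (1 : Matrix (Fin d) (Fin d) ℂ) - (d : ℂ)⁻¹ • 1
                      = ((1 - (d : ℂ)⁻¹)) • (1 : Matrix (Fin d) (Fin d) ℂ) from by
                    rw [sub_smul, one_smul], smul_smul]
      _ = depolPOVM ((d : ℝ)⁻¹) M j := by
          rw [hPM j]
          simp only [depolPOVM]
          rw [htrM j]
          congr 1
          · congr 1
            push_cast
            ring
          · congr 1
            push_cast
            ring
  rw [← hkey]
  have := Finset.centerMass_mem_convexHull (Finset.univ : Finset (Fin n × Fin d × Fin n))
    (fun x _ => hw0 x) (by rw [hwsum]; norm_num)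
    (fun x _ => hzmem x)
  rwa [Finset.centerMass_eq_of_sum_1 _ _ hwsum] at this
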